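/- Let δ_KT be the profile index function mapping each profile with at least two agents to the average Kendall tau distance over all unordered pairs of distinct agents' rankings (and single-agent profiles to 0). Then the profile-index-based DSF Δ_{δ_KT} satisfies Uniform Reinforcement. -/

import Mathlib

open scoped Classical

/-- A preference: a strict linear order on the set `X` of proposals, represented as a
ranking, i.e., a bijection assigning to every proposal its position (position `0` = top). -/
abbrev Pref (X : Type) [Fintype X] : Type := X ≃ Fin (Fintype.card X)

/-- A profile: a finite nonempty electorate `N ⊂ ℕ` together with a preference for each agent. -/
structure Profile (X : Type) [Fintype X] : Type where
  agents : Finset ℕ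
  agents_nonempty : agents.Nonempty
  pref : (i : ℕ) → i ∈ agents → Pref X

namespace Profile

variable {X : Type} [Fintype X]

/-- The position of proposal `x` in agent `i`'s ranking (top position is `1`). -/
def pos (R : Profile X) (i : ℕ) (hi : i ∈ R.agents) (x : X) : ℕ :=
  (R.pref i hi x : ℕ) + 1

/-- The profile `R ∘ σ`, obtained by relabelling agents via a bijection `σ : ℕ ≃ ℕ`;
it is defined on `σ⁻¹(N)`. -/
def comp (R : Profile X) (σ : ℕ ≃ ℕ) : Profile X where
  agents := R.agents.map σ.symm.toEmbedding
  agents_nonempty := by simpa using R.agents_nonempty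
  pref i hi := R.pref (σ i) (by
    obtain ⟨j, hj, hij⟩ := Finset.mem_map.mp hi
    simp only [Equiv.coe_toEmbedding] at hij
    subst hij
    simpa using hj)

/-- The profile `σ(R)`, obtained by applying a permutation `σ : X ≃ X` of the proposals
pointwise to every ranking (the position of `σ x` in `σ(R)` is the position of `x` in `R`). -/
def permute (R : Profile X) (σ : X ≃ X) : Profile X where
  agents := R.agents
  agents_nonempty := R.agents_nonempty
  pref i hi := σ.symm.trans (R.pref i hi)

/-- The profile obtained from `R` by inverting every agent's ranking. -/
def invert (R : Profile X) : Profile X where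
  agents := R.agents
  agents_nonempty := R.agents_nonempty
  pref i hi := (R.pref i hi).trans Fin.revPerm

/-- The profile `R^x̂`, obtained from `R` by moving proposal `x` to the top of every
agent's ranking (leaving the relative order of all other proposals unchanged). -/
def moveTop (R : Profile X) (x : X) : Profile X where
  agents := R.agents
  agents_nonempty := R.agents_nonempty
  pref i hi := (R.pref i hi).trans (Fin.cycleRange (R.pref i hi x))

/-- The restriction `R|_C` of profile `R` to a nonempty coalition `C ⊆ N`. -/
def restrict (R : Profile X) (C : Finset ℕ) (hne : C.Nonempty) (hsub : C ⊆ R.agents) :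
    Profile X where
  agents := C
  agents_nonempty := hne
  pref i hi := R.pref i (hsub hi)

/-- The union `R ⊕ R'` of two profiles with disjoint electorates. -/
def union (R R' : Profile X) (_h : Disjoint R.agents R'.agents) : Profile X where
  agents := R.agents ∪ R'.agents
  agents_nonempty := R.agents_nonempty.mono Finset.subset_union_left
  pref i hi :=
    if h1 : i ∈ R.agents then R.pref i h1
    else R'.pref i ((Finset.mem_union.mp hi).resolve_left h1)

/-- The number of agents in `R` reporting the preference `r`. -/
noncomputable def count (R : Profile X) (r : Pref X) : ℕ :=
  (R.agents.attach.filter fun i => R.pref i.1 i.2 = r).card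

/-- A profile is perfectly uniform if each possible preference occurs equally often in it. -/
def IsUniform (R : Profile X) : Prop := ∃ k : ℕ, ∀ r : Pref X, R.count r = k

/-- A profile is unanimous if all agents report the same ranking. -/
def IsUnanimous (R : Profile X) : Prop :=
  ∀ i (hi : i ∈ R.agents) j (hj : j ∈ R.agents), R.pref i hi = R.pref j hj

/-- Proposal `x` occurs in the same position in every agent's ranking in `R`. -/
def SamePos (R : Profile X) (x : X) : Prop :=
  ∀ i (hi : i ∈ R.agents) j (hj : j ∈ R.agents), R.pref i hi x = R.pref j hj x

/-- Proposal `x` is Pareto-dominated in `R`: some proposal `y` is ranked above `x`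
by every agent. -/
def ParetoDominated (R : Profile X) (x : X) : Prop :=
  ∃ y : X, ∀ i (hi : i ∈ R.agents), R.pref i hi y < R.pref i hi x

/-- Proposals `x` and `y` are clones in `R`: they are distinct and appear adjacent to one
another in every agent's ranking. -/
def Clones (R : Profile X) (x y : X) : Prop :=
  x ≠ y ∧ ∀ i (hi : i ∈ R.agents),
    (R.pref i hi x : ℕ) + 1 = (R.pref i hi y : ℕ) ∨
    (R.pref i hi y : ℕ) + 1 = (R.pref i hi x : ℕ)

end Profile

section Axioms

variable {X : Type} [Fintype X]

/-- A DSF (here: any map from profiles to sets of proposals) is proper if it always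
returns a nonempty set of proposals. -/
def IsDSF (Δ : Profile X → Set X) : Prop := ∀ R : Profile X, (Δ R).Nonempty

/-- Anonymity: `Δ(R) = Δ(R ∘ σ)` for every profile `R` and bijection `σ : ℕ ≃ ℕ`. -/
def Anonymity (Δ : Profile X → Set X) : Prop :=
  ∀ (R : Profile X) (σ : ℕ ≃ ℕ), Δ R = Δ (R.comp σ)

/-- Neutrality: `Δ(σ(R)) = σ(Δ(R))` for every profile `R` and permutation `σ : X ≃ X`. -/
def Neutrality (Δ : Profile X → Set X) : Prop :=
  ∀ (R : Profile X) (σ : X ≃ X), Δ (R.permute σ) = σ '' Δ R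

/-- Uniformity: `Δ(R) = X` for every perfectly uniform profile `R`. -/
def Uniformity (Δ : Profile X → Set X) : Prop :=
  ∀ R : Profile X, R.IsUniform → Δ R = Set.univ

/-- Weak Position Unanimity: if `x` occurs in the same position in every agent's ranking
in `R`, then `x ∉ Δ(R)` or `Δ(R) = X`. -/
def WeakPositionUnanimity (Δ : Profile X → Set X) : Prop :=
  ∀ (R : Profile X) (x : X), R.SamePos x → x ∉ Δ R ∨ Δ R = Set.univ

/-- Position Unanimity: if `R` is not unanimous and `x` occurs in the same position in
every agent's ranking in `R`, then `x ∉ Δ(R)`. -/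
def PositionUnanimity (Δ : Profile X → Set X) : Prop :=
  ∀ (R : Profile X) (x : X), ¬ R.IsUnanimous → R.SamePos x → x ∉ Δ R

/-- Pareto Efficiency: Pareto-dominated proposals are never selected. -/
def ParetoEfficiency (Δ : Profile X → Set X) : Prop :=
  ∀ (R : Profile X) (x : X), R.ParetoDominated x → x ∉ Δ R

/-- Weak Pareto Efficiency: for every Pareto-dominated proposal `x` of a profile `R`,
either `x ∉ Δ(R)` or `Δ(R) = X`. -/
def WeakParetoEfficiency (Δ : Profile X → Set X) : Prop :=
  ∀ (R : Profile X) (x : X), R.ParetoDominated x → x ∉ Δ R ∨ Δ R = Set.univ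

/-- Inversion Invariance: `Δ(R) = Δ(R')` whenever `R'` is obtained from `R` by inverting
every agent's ranking. -/
def InversionInvariance (Δ : Profile X → Set X) : Prop :=
  ∀ R : Profile X, Δ R = Δ R.invert

/-- Clone Consistency: if `x` and `x'` are clones in `R`, `x` and `y` are not clones in `R`,
and `{x,y} ⊆ Δ(R)`, then `x' ∈ Δ(R)`. -/
def CloneConsistency (Δ : Profile X → Set X) : Prop :=
  ∀ (R : Profile X) (x x' y : X), R.Clones x x' → ¬ R.Clones x y →
    x ∈ Δ R → y ∈ Δ R → x' ∈ Δ R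

/-- Uniform Reinforcement: `Δ(R) = Δ(R ⊕ R^U)` for every profile `R` and every perfectly
uniform profile `R^U` with electorate disjoint from that of `R`. -/
def UniformReinforcement (Δ : Profile X → Set X) : Prop :=
  ∀ (R RU : Profile X) (h : Disjoint R.agents RU.agents),
    RU.IsUniform → Δ R = Δ (R.union RU h)

end Axioms
section Score

variable {X : Type} [Fintype X]

/-- A scoring function `s` is normalised positional if it is induced by a scoring vector
`(s_1, ..., s_m)`: `s(R|_C, x) = (1/|C|) · Σ_{i ∈ C} s_{pos_i(x)}`. -/
def IsNormPositional (s : Profile X → X → ℝ) : Prop :=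
  ∃ v : Fin (Fintype.card X) → ℝ, ∀ (R : Profile X) (x : X),
    s R x = (∑ i ∈ R.agents.attach, v (R.pref i.1 i.2 x)) / R.agents.card

/-- `div_s(R, x, C, C̄)`: the absolute difference of the scores of `x` in the restrictions
of `R` to `C` and to its complement `C̄ = N \ C` (and `0` if either part is empty). -/
noncomputable def divScore (s : Profile X → X → ℝ) (R : Profile X) (x : X) (C : Finset ℕ) : ℝ :=
  if h : C ⊆ R.agents ∧ C.Nonempty ∧ (R.agents \ C).Nonempty then
    |s (R.restrict C h.2.1 h.1) x -
      s (R.restrict (R.agents \ C) h.2.2 Finset.sdiff_subset) x|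
  else 0

/-- `p` is an array of probability distributions over decompositions of the electorate:
for each profile `R` and proposal `x`, `p R x` is nonnegative and the values `p R x C`
over all `C ⊆ N` sum to `1`.  (Each unordered decomposition `{C, C̄}` thus receives
probability `p R x C + p R x C̄`.) -/
def IsDecompDist (p : Profile X → X → Finset ℕ → ℝ) : Prop :=
  ∀ (R : Profile X) (x : X),
    (∀ C, 0 ≤ p R x C) ∧ (∑ C ∈ R.agents.powerset, p R x C) = 1

/-- The score-based DSF `Δ^p_s`: it selects the proposals maximising the expected
score difference between the two parts of a sampled decomposition of the electorate. -/
noncomputable def scoreDSF (s : Profile X → X → ℝ) (p : Profile X → X → Finset ℕ → ℝ)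
    (R : Profile X) : Set X :=
  {x | ∀ y : X, (∑ C ∈ R.agents.powerset, p R y C * divScore s R y C)
      ≤ ∑ C ∈ R.agents.powerset, p R x C * divScore s R x C}

/-- The normalised Plurality scoring function (scoring vector `(1, 0, ..., 0)`). -/
noncomputable def pluralityScore (R : Profile X) (x : X) : ℝ :=
  ((R.agents.attach.filter fun i => (R.pref i.1 i.2 x : ℕ) = 0).card : ℝ) / R.agents.card

/-- The normalised Borda scoring function (scoring vector `(m-1, m-2, ..., 0)`). -/
noncomputable def normBordaScore (R : Profile X) (x : X) : ℝ :=
  (∑ i ∈ R.agents.attach,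
    ((Fintype.card X : ℝ) - (((R.pref i.1 i.2 x : ℕ) : ℝ) + 1))) / R.agents.card

end Score

section SCF

variable {X : Type} [Fintype X]

/-- A social choice function is Pareto-efficient if it never selects a Pareto-dominated
proposal. -/
def ParetoEfficientSCF (F : Profile X → Finset X) : Prop :=
  ∀ (R : Profile X) (x : X), R.ParetoDominated x → x ∉ F R

/-- `div_F(R, x, C, C̄) = | [x ∈ F(R|_C)]/|F(R|_C)| - [x ∈ F(R|_C̄)]/|F(R|_C̄)| |`
(and `0` if either part of the decomposition is empty). -/
noncomputable def divSCF (F : Profile X → Finset X) (R : Profile X) (x : X) (C : Finset ℕ) : ℝ :=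
  if h : C ⊆ R.agents ∧ C.Nonempty ∧ (R.agents \ C).Nonempty then
    |(if x ∈ F (R.restrict C h.2.1 h.1) then ((F (R.restrict C h.2.1 h.1)).card : ℝ)⁻¹ else 0) -
      (if x ∈ F (R.restrict (R.agents \ C) h.2.2 Finset.sdiff_subset) then
        ((F (R.restrict (R.agents \ C) h.2.2 Finset.sdiff_subset)).card : ℝ)⁻¹ else 0)|
  else 0

/-- The SCF-based DSF `Δ^p_F`. -/
noncomputable def scfDSF (F : Profile X → Finset X) (p : Profile X → X → Finset ℕ → ℝ)
    (R : Profile X) : Set X :=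
  {x | ∀ y : X, (∑ C ∈ R.agents.powerset, p R y C * divSCF F R y C)
      ≤ ∑ C ∈ R.agents.powerset, p R x C * divSCF F R x C}

/-- The Borda score of `x` in `R`: `Σ_{i ∈ N} (m − pos_i(x))`. -/
noncomputable def bordaScore (R : Profile X) (x : X) : ℕ :=
  ∑ i ∈ R.agents.attach, (Fintype.card X - R.pos i.1 i.2 x)

/-- The Borda rule: the SCF selecting the proposals with maximal Borda score. -/
noncomputable def bordaRule (R : Profile X) : Finset X :=
  Finset.univ.filter fun x => ∀ y : X, bordaScore R y ≤ bordaScore R x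

end SCF

section Index

variable {X : Type} [Fintype X]

/-- A profile index function `δ` is neutral if it is invariant under permutations
of the proposals. -/
def NeutralIndex (δ : Profile X → ℝ) : Prop :=
  ∀ (R : Profile X) (σ : X ≃ X), δ (R.permute σ) = δ R

/-- The profile-index-based DSF `Δ_δ`: it selects the proposals `x` minimising `δ(R^x̂)`. -/
noncomputable def indexDSF (δ : Profile X → ℝ) (R : Profile X) : Set X :=
  {x | ∀ y : X, δ (R.moveTop x) ≤ δ (R.moveTop y)}

/-- The Kendall tau distance between two rankings: the number of (unordered) pairs of
distinct proposals on whose relative ranking the two rankings disagree (counted here as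
ordered pairs with a fixed orientation of the disagreement). -/
noncomputable def kendallTau (r r' : Pref X) : ℕ :=
  (Finset.univ.filter fun q : X × X => r q.1 < r q.2 ∧ r' q.2 < r' q.1).card

/-- The average Kendall tau distance over all unordered pairs of distinct agents of the
profile (`0` for single-agent profiles), here computed via ordered pairs. -/
noncomputable def deltaKT (R : Profile X) : ℝ :=
  (∑ i ∈ R.agents.attach, ∑ j ∈ R.agents.attach,
      if i ≠ j then (kendallTau (R.pref i.1 i.2) (R.pref j.1 j.2) : ℝ) else 0) /
    ((R.agents.card : ℝ) * ((R.agents.card : ℝ) - 1))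

end Index

section RankVar

variable {X : Type} [Fintype X]

/-- The mean position `μ^R(x)` of proposal `x` in profile `R`. -/
noncomputable def meanPos (R : Profile X) (x : X) : ℝ :=
  (∑ i ∈ R.agents.attach, (R.pos i.1 i.2 x : ℝ)) / R.agents.card

/-- The variance of the positions at which proposal `x` occurs in profile `R`. -/
noncomputable def rankVar (R : Profile X) (x : X) : ℝ :=
  (∑ i ∈ R.agents.attach, ((R.pos i.1 i.2 x : ℝ) - meanPos R x) ^ 2) / R.agents.card

/-- The rank-variance DSF `Δ_var`. -/
noncomputable def rankVarDSF (R : Profile X) : Set X :=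
  {x | ∀ y : X, rankVar R y ≤ rankVar R x}

end RankVar
section UR
variable {X : Type} [Fintype X]

/-- move `x` to top of ranking `r`. -/
noncomputable def mvTop (x : X) (r : Pref X) : Pref X := r.trans (Fin.cycleRange (r x))

lemma mvTop_trans (σ : X ≃ X) (s : Pref X) (y : X) :
    mvTop y (σ.trans s) = σ.trans (mvTop (σ y) s) := rfl

lemma cycleRange_self' {n : ℕ} (i : Fin n) : (Fin.cycleRange i i : Fin n) = ⟨0, i.pos⟩ := by
  cases n with
  | zero => exact i.elim0
  | succ n => simp [Fin.cycleRange_self]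

lemma mvTop_apply_self (x : X) (r : Pref X) : mvTop x r x = ⟨0, (r x).pos⟩ := by
  simp [mvTop, cycleRange_self']

lemma kendallTau_self (r : Pref X) : kendallTau r r = 0 := by
  rw [kendallTau, Finset.card_eq_zero, Finset.filter_eq_empty_iff]
  rintro q - ⟨h1, h2⟩
  exact absurd (h1.trans h2) (lt_irrefl _)

lemma kendallTau_comm (r s : Pref X) : kendallTau r s = kendallTau s r := by
  rw [kendallTau, kendallTau]
  apply Finset.card_nbij' (fun q => (q.2, q.1)) (fun q => (q.2, q.1)) <;>
    simp +contextual [and_comm, Set.MapsTo, Set.LeftInvOn, Set.RightInvOn]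

lemma kendallTau_trans (σ : X ≃ X) (r s : Pref X) :
    kendallTau (σ.trans r) (σ.trans s) = kendallTau r s := by
  rw [kendallTau, kendallTau]
  apply Finset.card_nbij' (fun q => (σ q.1, σ q.2)) (fun q => (σ.symm q.1, σ.symm q.2)) <;>
    simp +contextual [and_comm, Set.MapsTo, Set.LeftInvOn, Set.RightInvOn] <;>
    intro a b
  · intro h
    exact (Finset.mem_filter.mp (Finset.mem_coe.mp h)).2
  · intro h1 h2
    exact Finset.mem_coe.mpr
      (Finset.mem_filter.mpr ⟨Finset.mem_univ _, by simpa using h1, by simpa using h2⟩)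

end UR

section UR2
variable {X : Type} [Fintype X]

/-- precomposition with `σ` as an equivalence of `Pref X`. -/
noncomputable def preComp (σ : X ≃ X) : Pref X ≃ Pref X where
  toFun s := σ.trans s
  invFun s := σ.symm.trans s
  left_inv s := by ext a; simp
  right_inv s := by ext a; simp

lemma sum_mvTop_const (r : Pref X) (x y : X) :
    ∑ s : Pref X, (kendallTau (mvTop x r) (mvTop x s) : ℝ)
      = ∑ s : Pref X, (kendallTau (mvTop y r) (mvTop y s) : ℝ) := by
  set σ : X ≃ X := (mvTop y r).trans (mvTop x r).symm with hσdef
  have hσ : σ.trans (mvTop x r) = mvTop y r := by ext a; simp [hσdef]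
  have hx : σ y = x := by
    apply (mvTop x r).injective
    show (σ.trans (mvTop x r)) y = _
    rw [hσ, mvTop_apply_self, mvTop_apply_self]
  calc ∑ s : Pref X, (kendallTau (mvTop x r) (mvTop x s) : ℝ)
      = ∑ s : Pref X, (kendallTau (mvTop y r) (mvTop y (preComp σ s)) : ℝ) := by
        refine Finset.sum_congr rfl fun s _ => ?_
        have h1 : mvTop y (preComp σ s) = σ.trans (mvTop x s) := by
          show mvTop y (σ.trans s) = _
          rw [mvTop_trans, hx]
        rw [h1, ← hσ, kendallTau_trans]
    _ = _ := Equiv.sum_comp (preComp σ) (fun s => (kendallTau (mvTop y r) (mvTop y s) : ℝ))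

lemma sum2_mvTop_const (x y : X) :
    ∑ s : Pref X, ∑ t : Pref X, (kendallTau (mvTop x s) (mvTop x t) : ℝ)
      = ∑ s : Pref X, ∑ t : Pref X, (kendallTau (mvTop y s) (mvTop y t) : ℝ) := by
  set σ : X ≃ X := Equiv.swap y x with hσdef
  have hx : σ y = x := Equiv.swap_apply_left y x
  calc ∑ s : Pref X, ∑ t : Pref X, (kendallTau (mvTop x s) (mvTop x t) : ℝ)
      = ∑ s : Pref X, ∑ t : Pref X,
          (kendallTau (mvTop y (preComp σ s)) (mvTop y (preComp σ t)) : ℝ) := by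
        refine Finset.sum_congr rfl fun s _ => Finset.sum_congr rfl fun t _ => ?_
        have h1 : ∀ u : Pref X, mvTop y (preComp σ u) = σ.trans (mvTop x u) := fun u => by
          show mvTop y (σ.trans u) = _
          rw [mvTop_trans, hx]
        rw [h1, h1, kendallTau_trans]
    _ = ∑ s : Pref X, ∑ t : Pref X, (kendallTau (mvTop y (preComp σ s)) (mvTop y t) : ℝ) := by
        refine Finset.sum_congr rfl fun s _ => ?_
        exact Equiv.sum_comp (preComp σ) (fun t => (kendallTau (mvTop y (preComp σ s)) (mvTop y t) : ℝ))
    _ = _ := Equiv.sum_comp (preComp σ) (fun s => ∑ t : Pref X, (kendallTau (mvTop y s) (mvTop y t) : ℝ))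

end UR2

section URproof
variable {X : Type} [Fintype X]

noncomputable def prefD (R : Profile X) (i : ℕ) : Pref X :=
  if h : i ∈ R.agents then R.pref i h else (Fintype.equivFin X)

lemma prefD_pos {R : Profile X} {i : ℕ} (h : i ∈ R.agents) : prefD R i = R.pref i h :=
  dif_pos h

/-- The numerator of `deltaKT (R.moveTop x)`. -/
noncomputable def numer (R : Profile X) (x : X) : ℝ :=
  ∑ i ∈ R.agents, ∑ j ∈ R.agents,
    (kendallTau (mvTop x (prefD R i)) (mvTop x (prefD R j)) : ℝ)

lemma deltaKT_eq (R : Profile X) :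
    deltaKT R = (∑ i ∈ R.agents, ∑ j ∈ R.agents, (kendallTau (prefD R i) (prefD R j) : ℝ)) /
      ((R.agents.card : ℝ) * ((R.agents.card : ℝ) - 1)) := by
  rw [deltaKT]
  congr 1
  rw [← Finset.sum_attach R.agents
    (fun i => ∑ j ∈ R.agents, (kendallTau (prefD R i) (prefD R j) : ℝ))]
  refine Finset.sum_congr rfl fun i _ => ?_
  rw [← Finset.sum_attach R.agents (fun j => (kendallTau (prefD R i.1) (prefD R j) : ℝ))]
  refine Finset.sum_congr rfl fun j _ => ?_
  by_cases hij : i = j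
  · subst hij
    rw [if_neg (by simp), kendallTau_self]
    simp
  · rw [if_pos hij, prefD_pos i.2, prefD_pos j.2]

lemma prefD_moveTop {R : Profile X} {i : ℕ} (x : X) (h : i ∈ R.agents) :
    prefD (R.moveTop x) i = mvTop x (prefD R i) := by
  have h' : i ∈ (R.moveTop x).agents := h
  rw [prefD_pos h', prefD_pos h]
  rfl

lemma deltaKT_moveTop (R : Profile X) (x : X) :
    deltaKT (R.moveTop x) = numer R x /
      ((R.agents.card : ℝ) * ((R.agents.card : ℝ) - 1)) := by
  rw [deltaKT_eq]
  rw [show (R.moveTop x).agents = R.agents from rfl]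
  have hs : (∑ i ∈ R.agents, ∑ j ∈ R.agents,
      (kendallTau (prefD (R.moveTop x) i) (prefD (R.moveTop x) j) : ℝ)) = numer R x := by
    rw [numer]
    refine Finset.sum_congr rfl fun i hi => Finset.sum_congr rfl fun j hj => ?_
    rw [prefD_moveTop x hi, prefD_moveTop x hj]
  rw [hs]

lemma prefD_union_left {R RU : Profile X} {h : Disjoint R.agents RU.agents} {i : ℕ}
    (hi : i ∈ R.agents) : prefD (R.union RU h) i = prefD R i := by
  rw [show prefD (R.union RU h) i = (R.union RU h).pref i (Finset.mem_union_left _ hi) from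
    prefD_pos _, prefD_pos hi]
  show (if h1 : i ∈ R.agents then R.pref i h1 else _) = _
  rw [dif_pos hi]

lemma prefD_union_right {R RU : Profile X} {h : Disjoint R.agents RU.agents} {i : ℕ}
    (hi : i ∈ RU.agents) : prefD (R.union RU h) i = prefD RU i := by
  have hiR : i ∉ R.agents := fun hiR => (Finset.disjoint_left.mp h) hiR hi
  rw [show prefD (R.union RU h) i = (R.union RU h).pref i (Finset.mem_union_right _ hi) from
    prefD_pos _, prefD_pos hi]
  show (if h1 : i ∈ R.agents then R.pref i h1 else _) = _
  rw [dif_neg hiR]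

lemma sum_uniform (RU : Profile X) {k : ℕ} (hk : ∀ r, RU.count r = k) (F : Pref X → ℝ) :
    ∑ i ∈ RU.agents, F (prefD RU i) = (k : ℝ) * ∑ r : Pref X, F r := by
  rw [← Finset.sum_attach RU.agents (fun i => F (prefD RU i)),
    ← Finset.sum_fiberwise RU.agents.attach (fun i => RU.pref i.1 i.2)
      (fun i => F (prefD RU i.1)), Finset.mul_sum]
  refine Finset.sum_congr rfl fun r _ => ?_
  have hterm : ∀ i ∈ RU.agents.attach.filter (fun i => RU.pref i.1 i.2 = r),
      F (prefD RU i.1) = F r := by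
    intro i hi
    obtain ⟨-, h2⟩ := Finset.mem_filter.mp hi
    rw [prefD_pos i.2, h2]
  rw [Finset.sum_congr rfl hterm, Finset.sum_const]
  have hcard : (RU.agents.attach.filter (fun i => RU.pref i.1 i.2 = r)).card = k := hk r
  rw [hcard, nsmul_eq_mul]

lemma numer_union_eq (R RU : Profile X) (h : Disjoint R.agents RU.agents) {k : ℕ}
    (hk : ∀ r, RU.count r = k) (x : X) :
    numer (R.union RU h) x = numer R x
      + (∑ i ∈ R.agents, (k : ℝ) *
          ∑ s : Pref X, (kendallTau (mvTop x (prefD R i)) (mvTop x s) : ℝ))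
      + (∑ j ∈ R.agents, (k : ℝ) *
          ∑ s : Pref X, (kendallTau (mvTop x s) (mvTop x (prefD R j)) : ℝ))
      + (k : ℝ) * ((k : ℝ) *
          ∑ s : Pref X, ∑ t : Pref X, (kendallTau (mvTop x s) (mvTop x t) : ℝ)) := by
  have hag : (R.union RU h).agents = R.agents ∪ RU.agents := rfl
  rw [numer, hag, Finset.sum_union h]
  have hsplit : ∀ i : ℕ,
      ∑ j ∈ R.agents ∪ RU.agents,
        (kendallTau (mvTop x (prefD (R.union RU h) i)) (mvTop x (prefD (R.union RU h) j)) : ℝ)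
      = (∑ j ∈ R.agents,
          (kendallTau (mvTop x (prefD (R.union RU h) i)) (mvTop x (prefD (R.union RU h) j)) : ℝ))
        + ∑ j ∈ RU.agents,
          (kendallTau (mvTop x (prefD (R.union RU h) i)) (mvTop x (prefD (R.union RU h) j)) : ℝ) :=
    fun i => Finset.sum_union h
  rw [Finset.sum_congr rfl fun i _ => hsplit i, Finset.sum_congr rfl fun i _ => hsplit i,
    Finset.sum_add_distrib, Finset.sum_add_distrib]
  have T1 : ∑ i ∈ R.agents, ∑ j ∈ R.agents,
      (kendallTau (mvTop x (prefD (R.union RU h) i)) (mvTop x (prefD (R.union RU h) j)) : ℝ)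
      = numer R x := by
    rw [numer]
    refine Finset.sum_congr rfl fun i hi => Finset.sum_congr rfl fun j hj => ?_
    rw [prefD_union_left hi, prefD_union_left hj]
  have T2 : ∑ i ∈ R.agents, ∑ j ∈ RU.agents,
      (kendallTau (mvTop x (prefD (R.union RU h) i)) (mvTop x (prefD (R.union RU h) j)) : ℝ)
      = ∑ i ∈ R.agents, (k : ℝ) *
          ∑ s : Pref X, (kendallTau (mvTop x (prefD R i)) (mvTop x s) : ℝ) := by
    refine Finset.sum_congr rfl fun i hi => ?_
    rw [show (∑ j ∈ RU.agents,
        (kendallTau (mvTop x (prefD (R.union RU h) i)) (mvTop x (prefD (R.union RU h) j)) : ℝ))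
      = ∑ j ∈ RU.agents,
        (kendallTau (mvTop x (prefD R i)) (mvTop x (prefD RU j)) : ℝ) from
      Finset.sum_congr rfl fun j hj => by rw [prefD_union_left hi, prefD_union_right hj]]
    exact sum_uniform RU hk (fun s => (kendallTau (mvTop x (prefD R i)) (mvTop x s) : ℝ))
  have T3 : ∑ i ∈ RU.agents, ∑ j ∈ R.agents,
      (kendallTau (mvTop x (prefD (R.union RU h) i)) (mvTop x (prefD (R.union RU h) j)) : ℝ)
      = ∑ j ∈ R.agents, (k : ℝ) *
          ∑ s : Pref X, (kendallTau (mvTop x s) (mvTop x (prefD R j)) : ℝ) := by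
    rw [Finset.sum_comm]
    refine Finset.sum_congr rfl fun j hj => ?_
    rw [show (∑ i ∈ RU.agents,
        (kendallTau (mvTop x (prefD (R.union RU h) i)) (mvTop x (prefD (R.union RU h) j)) : ℝ))
      = ∑ i ∈ RU.agents,
        (kendallTau (mvTop x (prefD RU i)) (mvTop x (prefD R j)) : ℝ) from
      Finset.sum_congr rfl fun i hi => by rw [prefD_union_right hi, prefD_union_left hj]]
    exact sum_uniform RU hk (fun s => (kendallTau (mvTop x s) (mvTop x (prefD R j)) : ℝ))
  have T4 : ∑ i ∈ RU.agents, ∑ j ∈ RU.agents,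
      (kendallTau (mvTop x (prefD (R.union RU h) i)) (mvTop x (prefD (R.union RU h) j)) : ℝ)
      = (k : ℝ) * ((k : ℝ) *
          ∑ s : Pref X, ∑ t : Pref X, (kendallTau (mvTop x s) (mvTop x t) : ℝ)) := by
    have step : ∀ i ∈ RU.agents, ∑ j ∈ RU.agents,
        (kendallTau (mvTop x (prefD (R.union RU h) i)) (mvTop x (prefD (R.union RU h) j)) : ℝ)
        = (k : ℝ) * ∑ t : Pref X, (kendallTau (mvTop x (prefD RU i)) (mvTop x t) : ℝ) := by
      intro i hi
      rw [show (∑ j ∈ RU.agents,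
          (kendallTau (mvTop x (prefD (R.union RU h) i)) (mvTop x (prefD (R.union RU h) j)) : ℝ))
        = ∑ j ∈ RU.agents,
          (kendallTau (mvTop x (prefD RU i)) (mvTop x (prefD RU j)) : ℝ) from
        Finset.sum_congr rfl fun j hj => by rw [prefD_union_right hi, prefD_union_right hj]]
      exact sum_uniform RU hk (fun s => (kendallTau (mvTop x (prefD RU i)) (mvTop x s) : ℝ))
    rw [Finset.sum_congr rfl step, ← Finset.mul_sum]
    congr 1
    exact sum_uniform RU hk
      (fun s => ∑ t : Pref X, (kendallTau (mvTop x s) (mvTop x t) : ℝ))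
  rw [T1, T2, T3, T4]
  ring

lemma numer_union_sub (R RU : Profile X) (h : Disjoint R.agents RU.agents) {k : ℕ}
    (hk : ∀ r, RU.count r = k) (x y : X) :
    numer (R.union RU h) x - numer R x = numer (R.union RU h) y - numer R y := by
  rw [numer_union_eq R RU h hk x, numer_union_eq R RU h hk y]
  have E2 : ∀ i ∈ R.agents, (k : ℝ) *
      ∑ s : Pref X, (kendallTau (mvTop x (prefD R i)) (mvTop x s) : ℝ)
      = (k : ℝ) * ∑ s : Pref X, (kendallTau (mvTop y (prefD R i)) (mvTop y s) : ℝ) := by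
    intro i _
    rw [sum_mvTop_const (prefD R i) x y]
  have E3 : ∀ j ∈ R.agents, (k : ℝ) *
      ∑ s : Pref X, (kendallTau (mvTop x s) (mvTop x (prefD R j)) : ℝ)
      = (k : ℝ) * ∑ s : Pref X, (kendallTau (mvTop y s) (mvTop y (prefD R j)) : ℝ) := by
    intro j _
    have c1 : ∀ (z : X), (∑ s : Pref X, (kendallTau (mvTop z s) (mvTop z (prefD R j)) : ℝ))
        = ∑ s : Pref X, (kendallTau (mvTop z (prefD R j)) (mvTop z s) : ℝ) :=
      fun z => Finset.sum_congr rfl fun s _ => by rw [kendallTau_comm]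
    rw [c1 x, c1 y, sum_mvTop_const (prefD R j) x y]
  rw [Finset.sum_congr rfl E2, Finset.sum_congr rfl E3, sum2_mvTop_const x y]
  ring

lemma numer_card_one {R : Profile X} (hc : R.agents.card = 1) (x : X) : numer R x = 0 := by
  obtain ⟨a, ha⟩ := Finset.card_eq_one.mp hc
  rw [numer, ha]
  simp [kendallTau_self]

lemma mem_indexDSF_iff (R : Profile X) (x : X) :
    x ∈ indexDSF deltaKT R ↔ ∀ y : X, numer R x ≤ numer R y := by
  have hmem : x ∈ indexDSF deltaKT R ↔
      ∀ y : X, deltaKT (R.moveTop x) ≤ deltaKT (R.moveTop y) := Iff.rfl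
  rw [hmem]
  have h1 : 1 ≤ R.agents.card := R.agents_nonempty.card_pos
  rcases eq_or_lt_of_le h1 with hc | hc
  · have hz : ∀ z : X, numer R z = 0 := numer_card_one hc.symm
    constructor
    · intro _ y
      rw [hz x, hz y]
    · intro _ y
      rw [deltaKT_moveTop, deltaKT_moveTop, hz x, hz y]
  · have hd : 0 < (R.agents.card : ℝ) * ((R.agents.card : ℝ) - 1) := by
      have : (2 : ℝ) ≤ (R.agents.card : ℝ) := by exact_mod_cast hc
      nlinarith
    constructor
    · intro hx y
      have := hx y
      rw [deltaKT_moveTop, deltaKT_moveTop] at this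
      exact (div_le_div_iff_of_pos_right hd).mp this
    · intro hx y
      rw [deltaKT_moveTop, deltaKT_moveTop]
      exact (div_le_div_iff_of_pos_right hd).mpr (hx y)

end URproof

/-- Let `δ_KT` be the profile index function mapping each profile with
at least two agents to the average Kendall tau distance over all unordered pairs of
distinct agents' rankings (and single-agent profiles to `0`).  Then the
profile-index-based DSF `Δ_{δ_KT}` satisfies Uniform Reinforcement. -/
theorem divisiveness_stmt16 (X : Type) [Fintype X] :
    UniformReinforcement (indexDSF (deltaKT : Profile X → ℝ)) := by
  intro R RU h hU
  obtain ⟨k, hk⟩ := hU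
  ext x
  rw [mem_indexDSF_iff, mem_indexDSF_iff]
  constructor
  · intro hx y
    have hs := numer_union_sub R RU h hk x y
    have := hx y
    linarith
  · intro hx y
    have hs := numer_union_sub R RU h hk x y
    have := hx y
    linarith
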